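/- Let I ⊴ ℝ[x₁,…,xₙ] be an ideal invariant under a ring automorphism σ acting as a signed permutation of the variables (σ·xᵢ = uᵢ·x_{π(i)} with π a permutation of {1,…,n}, uᵢ ∈ {+1,−1}), let w ∈ ℚⁿ, let ≼ be a monomial order, and let G be a Gröbner basis of the initial ideal in_w(I) with respect to ≼ consisting of binomials. Then in_{π·w}(I) ∩ ℝ≥0[x] = {0} if and only if σ·G ∩ ℝ≥0[x] = ∅ and σ·G ∩ ℝ≤0[x] = ∅, where π acts on weight vectors by permuting coordinates ((π·w)_{π(i)} = wᵢ). -/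

import Mathlib

open MvPolynomial

/-- A monomial order on exponent vectors in `ℕⁿ`: a linear order on `Fin n →₀ ℕ`
compatible with addition and having `0` as least element. -/
structure MonOrd (n : ℕ) where
  le : (Fin n →₀ ℕ) → (Fin n →₀ ℕ) → Prop
  le_refl : ∀ a, le a a
  le_trans : ∀ a b c, le a b → le b c → le a c
  le_antisymm : ∀ a b, le a b → le b a → a = b
  le_total : ∀ a b, le a b ∨ le b a
  add_le_add_right : ∀ a b, le a b → ∀ c, le (a + c) (b + c)
  zero_le : ∀ a, le 0 a

/-- `α` is the exponent vector of the `m`-leading monomial of `f`. -/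
def IsLeadMon {n : ℕ} (m : MonOrd n) (f : MvPolynomial (Fin n) ℝ) (α : Fin n →₀ ℕ) : Prop :=
  α ∈ f.support ∧ ∀ β ∈ f.support, m.le β α

/-- `G` is a Gröbner basis of `J` with respect to the monomial order `m`. -/
def IsGroebnerBasis {n : ℕ} (m : MonOrd n) (G : Finset (MvPolynomial (Fin n) ℝ))
    (J : Ideal (MvPolynomial (Fin n) ℝ)) : Prop :=
  (G : Set (MvPolynomial (Fin n) ℝ)) ⊆ (J : Set (MvPolynomial (Fin n) ℝ)) ∧
    (∀ g ∈ G, g ≠ 0) ∧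
    ∀ f ∈ J, f ≠ 0 → ∃ g ∈ G, ∃ α β, IsLeadMon m f α ∧ IsLeadMon m g β ∧ β ≤ α

/-- All coefficients of `f` are nonnegative, i.e. `f ∈ ℝ≥0[x]`. -/
def NonnegCoeffs {n : ℕ} (f : MvPolynomial (Fin n) ℝ) : Prop := ∀ α, 0 ≤ coeff α f

/-- All coefficients of `f` are nonpositive, i.e. `f ∈ ℝ≤0[x]`. -/
def NonposCoeffs {n : ℕ} (f : MvPolynomial (Fin n) ℝ) : Prop := ∀ α, coeff α f ≤ 0

/-- The `w`-weighted degree of an exponent vector `α`: `w·α = Σᵢ wᵢ αᵢ`. -/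
def wdeg {n : ℕ} (w : Fin n → ℚ) (α : Fin n →₀ ℕ) : ℚ := ∑ i, w i * (α i : ℚ)

/-- The initial form `in_w(f)`: the sum of the terms `c_α x^α` of `f` for which `w·α`
is maximal over the support of `f` (with `in_w(0) = 0`). -/
noncomputable def initialForm {n : ℕ} (w : Fin n → ℚ)
    (f : MvPolynomial (Fin n) ℝ) : MvPolynomial (Fin n) ℝ :=
  ∑ α ∈ f.support.filter (fun α => ∀ β ∈ f.support, wdeg w β ≤ wdeg w α),
    monomial α (coeff α f)

/-- The initial ideal `in_w(I) = ⟨in_w(f) : f ∈ I⟩`. -/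
noncomputable def initialIdeal {n : ℕ} (w : Fin n → ℚ)
    (I : Ideal (MvPolynomial (Fin n) ℝ)) : Ideal (MvPolynomial (Fin n) ℝ) :=
  Ideal.span (initialForm w '' (I : Set (MvPolynomial (Fin n) ℝ)))

namespace Stmt11Aux

variable {n : ℕ}

def mlt (m : MonOrd n) (a b : Fin n →₀ ℕ) : Prop := m.le a b ∧ a ≠ b

lemma mlt_wf (m : MonOrd n) : WellFounded (mlt m) := by
  haveI : IsStrictOrder (Fin n →₀ ℕ) (mlt m) :=
    { irrefl := fun a h => h.2 rfl
      trans := fun a b c h1 h2 =>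
        ⟨m.le_trans _ _ _ h1.1 h2.1,
         fun he => h2.2 (m.le_antisymm _ _ h2.1 (he ▸ h1.1))⟩ }
  rw [RelEmbedding.wellFounded_iff_isEmpty]
  constructor
  intro f
  obtain ⟨i, j, hij, hle⟩ := (wellQuasiOrdered_le (α := Fin n →₀ ℕ))
    (fun k => f k)
  obtain ⟨c, hc⟩ := le_iff_exists_add.1 hle
  have h1 : m.le (f i) (f j) := by
    have := m.add_le_add_right 0 c (m.zero_le c) (f i)
    rwa [zero_add, add_comm, ← hc] at this
  have h2 : mlt m (f j) (f i) := f.map_rel_iff.2 hij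
  exact h2.2 (m.le_antisymm _ _ h2.1 h1)

lemma exists_max (m : MonOrd n) (s : Finset (Fin n →₀ ℕ)) (hs : s.Nonempty) :
    ∃ a ∈ s, ∀ b ∈ s, m.le b a := by
  classical
  revert hs
  induction s using Finset.induction_on with
  | empty => intro hs; simp at hs
  | @insert a s ha ih =>
    intro _
    rcases s.eq_empty_or_nonempty with rfl | hne
    · refine ⟨a, Finset.mem_insert_self _ _, ?_⟩
      intro b hb
      rcases Finset.mem_insert.1 hb with rfl | hb
      · exact m.le_refl _
      · simp at hb
    · obtain ⟨b, hb, hmax⟩ := ih hne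
      rcases m.le_total a b with h | h
      · refine ⟨b, Finset.mem_insert_of_mem hb, ?_⟩
        intro c hc
        rcases Finset.mem_insert.1 hc with rfl | hc
        · exact h
        · exact hmax c hc
      · refine ⟨a, Finset.mem_insert_self _ _, ?_⟩
        intro c hc
        rcases Finset.mem_insert.1 hc with rfl | hc
        · exact m.le_refl _
        · exact m.le_trans _ _ _ (hmax c hc) h

lemma exists_lead (m : MonOrd n) (f : MvPolynomial (Fin n) ℝ) (hf : f ≠ 0) :
    ∃ α, IsLeadMon m f α := by
  obtain ⟨a, ha, hmax⟩ := exists_max m f.support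
    (Finset.nonempty_iff_ne_empty.2 (fun h => hf (support_eq_empty.1 h)))
  exact ⟨a, ha, hmax⟩

lemma binom (m : MonOrd n) (g : MvPolynomial (Fin n) ℝ) (h2 : g.support.card = 2)
    (β₀ : Fin n →₀ ℕ) (hl : IsLeadMon m g β₀) :
    ∃ ν, ν ≠ β₀ ∧ g.support = {β₀, ν} ∧
      g = monomial β₀ (coeff β₀ g) + monomial ν (coeff ν g) ∧ m.le ν β₀ := by
  classical
  obtain ⟨μ, ν, hne, hsupp⟩ := Finset.card_eq_two.1 h2
  have hdec : ∀ x y : Fin n →₀ ℕ, x ≠ y → g.support = {x, y} →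
      g = monomial x (coeff x g) + monomial y (coeff y g) := by
    intro x y hxy hs
    ext β
    rw [coeff_add, coeff_monomial, coeff_monomial]
    by_cases h1 : x = β
    · subst h1
      rw [if_pos rfl, if_neg (Ne.symm hxy)]
      ring
    · by_cases h2' : y = β
      · subst h2'
        rw [if_neg h1, if_pos rfl]; ring
      · rw [if_neg h1, if_neg h2']
        have : β ∉ g.support := by
          rw [hs]; simp [Ne.symm h1, Ne.symm h2']
        rw [notMem_support_iff.1 this]; ring
  have hβ : β₀ = μ ∨ β₀ = ν := by
    have := hl.1; rw [hsupp] at this; simpa using this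
  rcases hβ with rfl | rfl
  · refine ⟨ν, Ne.symm hne, hsupp, hdec _ _ hne hsupp, ?_⟩
    exact hl.2 ν (by rw [hsupp]; simp)
  · refine ⟨μ, hne, ?_, ?_, ?_⟩
    · rw [hsupp, Finset.pair_comm]
    · have h' : g.support = {β₀, μ} := by rw [hsupp, Finset.pair_comm]
      exact hdec _ _ (Ne.symm hne) h'
    · exact hl.2 μ (by rw [hsupp]; simp)

end Stmt11Aux

namespace Stmt11Aux

variable {n : ℕ}

lemma key (m : MonOrd n) (G : Finset (MvPolynomial (Fin n) ℝ)) (J : Ideal (MvPolynomial (Fin n) ℝ))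
    (hGJ : (G : Set (MvPolynomial (Fin n) ℝ)) ⊆ (J : Set (MvPolynomial (Fin n) ℝ)))
    (hGB : ∀ f ∈ J, f ≠ 0 → ∃ g ∈ G, ∃ α β, IsLeadMon m f α ∧ IsLeadMon m g β ∧ β ≤ α)
    (hbin : ∀ g ∈ G, g.support.card = 2)
    (hpos : ∀ g ∈ G, ¬ NonnegCoeffs g) (hneg : ∀ g ∈ G, ¬ NonposCoeffs g) :
    ∀ f ∈ J, NonnegCoeffs f → f = 0 := by
  classical
  have main : ∀ α : Fin n →₀ ℕ, ∀ f, f ∈ J → NonnegCoeffs f → IsLeadMon m f α → False := by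
    intro α₀
    refine (mlt_wf m).induction
      (C := fun α => ∀ f, f ∈ J → NonnegCoeffs f → IsLeadMon m f α → False) α₀ ?_
    intro α IH f hfJ hfnn hlead
    have hf0 : f ≠ 0 := by
      intro h; rw [h] at hlead
      exact absurd hlead.1 (by simp)
    obtain ⟨g, hgG, α', β₀, hleadf, hleadg, hba⟩ := hGB f hfJ hf0
    have hαα : α' = α := m.le_antisymm _ _ (hlead.2 α' hleadf.1) (hleadf.2 α hlead.1)
    subst hαα
    obtain ⟨ν, hνβ, hsupp, hgdec, hνle⟩ := binom m g (hbin g hgG) β₀ hleadg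
    set c := coeff β₀ g with hc_def
    set d := coeff ν g with hd_def
    have hc : c ≠ 0 := mem_support_iff.1 hleadg.1
    have hd : d ≠ 0 := mem_support_iff.1 (by rw [hsupp]; simp)
    set a := coeff α' f with ha_def
    have ha : 0 < a := lt_of_le_of_ne (hfnn α') (Ne.symm (mem_support_iff.1 hlead.1))
    -- sign analysis of g
    have hsign1 : c < 0 ∨ d < 0 := by
      have := hpos g hgG
      rw [NonnegCoeffs] at this
      push_neg at this
      obtain ⟨β, hβ⟩ := this
      have hβs : β ∈ g.support := mem_support_iff.2 (ne_of_lt hβ)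
      rw [hsupp] at hβs
      rcases Finset.mem_insert.1 hβs with rfl | hβs
      · exact Or.inl hβ
      · simp only [Finset.mem_singleton] at hβs
        subst hβs; exact Or.inr hβ
    have hsign2 : 0 < c ∨ 0 < d := by
      have := hneg g hgG
      rw [NonposCoeffs] at this
      push_neg at this
      obtain ⟨β, hβ⟩ := this
      have hβs : β ∈ g.support := mem_support_iff.2 (ne_of_gt hβ)
      rw [hsupp] at hβs
      rcases Finset.mem_insert.1 hβs with rfl | hβs
      · exact Or.inl hβ
      · simp only [Finset.mem_singleton] at hβs
        subst hβs; exact Or.inr hβ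
    set q : ℝ := a / c * d with hq_def
    have hq : q < 0 := by
      rcases hsign1 with h1 | h1
      · have h2 : 0 < d := by
          rcases hsign2 with h2 | h2
          · exact absurd h2 (not_lt.2 (le_of_lt h1))
          · exact h2
        exact mul_neg_of_neg_of_pos (div_neg_of_pos_of_neg ha h1) h2
      · have h2 : 0 < c := by
          rcases hsign2 with h2 | h2
          · exact h2
          · exact absurd h2 (not_lt.2 (le_of_lt h1))
        exact mul_neg_of_pos_of_neg (div_pos ha h2) h1
    set τ : Fin n →₀ ℕ := α' - β₀ with hτ_def
    have hτ : τ + β₀ = α' := tsub_add_cancel_of_le hba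
    set f₁ : MvPolynomial (Fin n) ℝ := f - monomial τ (a / c) * g with hf₁_def
    have hmul : monomial τ (a / c) * g = monomial α' a + monomial (τ + ν) q := by
      rw [hgdec, mul_add, monomial_mul, monomial_mul, hτ, div_mul_cancel₀ a hc, hq_def]
    have hαν : α' ≠ τ + ν := by
      intro h
      rw [← hτ, add_comm τ β₀, add_comm τ ν] at h
      exact hνβ (add_right_cancel h).symm
    have hcoeff : ∀ β, coeff β f₁ = coeff β f
        - ((if α' = β then a else 0) + (if τ + ν = β then q else 0)) := by
      intro β
      rw [hf₁_def, coeff_sub, hmul, coeff_add, coeff_monomial, coeff_monomial]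
    have hnn1 : NonnegCoeffs f₁ := by
      intro β
      rw [hcoeff β]
      by_cases h1 : α' = β
      · rw [if_pos h1, if_neg (fun h => hαν (h1.trans h.symm))]
        rw [← h1, ← ha_def]; simp
      · rw [if_neg h1]
        by_cases h2 : τ + ν = β
        · rw [if_pos h2]
          have := hfnn β
          linarith
        · rw [if_neg h2]
          have := hfnn β
          linarith
    have hkey : 0 < coeff (τ + ν) f₁ := by
      rw [hcoeff _, if_neg hαν, if_pos rfl]
      have := hfnn (τ + ν)
      linarith
    have hne1 : f₁ ≠ 0 := by
      intro h
      rw [h, coeff_zero] at hkey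
      exact lt_irrefl 0 hkey
    have hJ1 : f₁ ∈ J := J.sub_mem hfJ (J.mul_mem_left _ (hGJ hgG))
    obtain ⟨α₁, hlead₁⟩ := exists_lead m f₁ hne1
    have hcoeffα : coeff α' f₁ = 0 := by
      rw [hcoeff _, if_pos rfl, if_neg (fun h => hαν h.symm)]
      rw [← ha_def]; ring
    have hα₁ : mlt m α₁ α' := by
      constructor
      · -- m.le α₁ α'
        by_cases h2 : τ + ν = α₁
        · rw [← h2]
          have h3 : m.le (ν + τ) (β₀ + τ) := m.add_le_add_right _ _ hνle τ
          rw [add_comm ν τ, add_comm β₀ τ, hτ] at h3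
          exact h3
        · by_cases h1 : α' = α₁
          · exfalso
            rw [← h1] at hlead₁
            exact mem_support_iff.1 hlead₁.1 hcoeffα
          · have hm := mem_support_iff.1 hlead₁.1
            rw [hcoeff _, if_neg h1, if_neg h2] at hm
            have h4 : coeff α₁ f ≠ 0 := fun h => hm (by rw [h]; ring)
            exact hlead.2 α₁ (mem_support_iff.2 h4)
      · intro h
        rw [h] at hlead₁
        exact mem_support_iff.1 hlead₁.1 hcoeffα
    exact IH α₁ hα₁ f₁ hJ1 hnn1 hlead₁
  intro f hf hnn
  by_contra h0
  obtain ⟨α, hl⟩ := exists_lead m f h0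
  exact main α f hf hnn hl

end Stmt11Aux

namespace Stmt11Aux

variable {n : ℕ}

noncomputable def sgn (u : Fin n → ℝ) (α : Fin n →₀ ℕ) : ℝ := α.prod fun i k => u i ^ k

lemma sgn_ne_zero (u : Fin n → ℝ) (hu : ∀ i, u i = 1 ∨ u i = -1) (α : Fin n →₀ ℕ) :
    sgn u α ≠ 0 := by
  rw [sgn, Finsupp.prod]
  apply Finset.prod_ne_zero_iff.2
  intro i _
  have h : u i ≠ 0 := by rcases hu i with h | h <;> rw [h] <;> norm_num
  exact pow_ne_zero _ h

lemma sigma_monomial (π : Equiv.Perm (Fin n)) (u : Fin n → ℝ)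
    (σ : MvPolynomial (Fin n) ℝ ≃ₐ[ℝ] MvPolynomial (Fin n) ℝ)
    (hσ : ∀ i, σ (X i) = u i • X (π i)) (α : Fin n →₀ ℕ) (c : ℝ) :
    σ (monomial α c) = monomial (Finsupp.equivMapDomain π α) (sgn u α * c) := by
  have hae : σ.toAlgHom = aeval (fun i => u i • X (π i)) :=
    MvPolynomial.algHom_ext fun i => by rw [aeval_X]; exact hσ i
  have h1 : σ (monomial α c)
      = C c * α.prod fun i k => ((u i • X (π i)) ^ k : MvPolynomial (Fin n) ℝ) := by
    have h2 : σ (monomial α c) = aeval (fun i => u i • X (π i)) (monomial α c) := by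
      rw [← hae]; rfl
    rw [h2, aeval_monomial, algebraMap_eq]
  have h3 : (α.prod fun i k => ((u i • X (π i)) ^ k : MvPolynomial (Fin n) ℝ))
      = C (sgn u α) * α.prod fun i k => ((X (π i)) ^ k : MvPolynomial (Fin n) ℝ) := by
    rw [sgn, Finsupp.prod, Finsupp.prod, Finsupp.prod, map_prod (C : ℝ →+* MvPolynomial (Fin n) ℝ),
      ← Finset.prod_mul_distrib]
    apply Finset.prod_congr rfl
    intro i _
    rw [smul_eq_C_mul, mul_pow, ← C_pow]
  rw [h1, h3, monomial_eq, Finsupp.prod_equivMapDomain, C_mul]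
  ring

lemma coeff_sigma (π : Equiv.Perm (Fin n)) (u : Fin n → ℝ)
    (σ : MvPolynomial (Fin n) ℝ ≃ₐ[ℝ] MvPolynomial (Fin n) ℝ)
    (hσ : ∀ i, σ (X i) = u i • X (π i)) (α : Fin n →₀ ℕ) (f : MvPolynomial (Fin n) ℝ) :
    coeff (Finsupp.equivMapDomain π α) (σ f) = sgn u α * coeff α f := by
  have hinj : Function.Injective (fun β => Finsupp.equivMapDomain π β :
      (Fin n →₀ ℕ) → (Fin n →₀ ℕ)) := by
    intro a b hab
    have := congrArg (Finsupp.equivMapDomain π.symm) hab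
    simpa [← Finsupp.equivMapDomain_trans] using this
  induction f using MvPolynomial.induction_on' with
  | monomial β c =>
    rw [sigma_monomial π u σ hσ, coeff_monomial, coeff_monomial]
    by_cases h : β = α
    · subst h; rw [if_pos rfl, if_pos rfl]
    · rw [if_neg (fun he => h (hinj he)), if_neg h, mul_zero]
  | add p q hp hq => rw [map_add, coeff_add, coeff_add, hp, hq]; ring

lemma equivMapDomain_inv (π : Equiv.Perm (Fin n)) (α : Fin n →₀ ℕ) :
    Finsupp.equivMapDomain π (Finsupp.equivMapDomain π.symm α) = α := by
  ext j; simp [Finsupp.equivMapDomain_apply]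

lemma equivMapDomain_inv' (π : Equiv.Perm (Fin n)) (α : Fin n →₀ ℕ) :
    Finsupp.equivMapDomain π.symm (Finsupp.equivMapDomain π α) = α := by
  ext j; simp [Finsupp.equivMapDomain_apply]

lemma coeff_sigma' (π : Equiv.Perm (Fin n)) (u : Fin n → ℝ)
    (σ : MvPolynomial (Fin n) ℝ ≃ₐ[ℝ] MvPolynomial (Fin n) ℝ)
    (hσ : ∀ i, σ (X i) = u i • X (π i)) (β : Fin n →₀ ℕ) (f : MvPolynomial (Fin n) ℝ) :
    coeff β (σ f) = sgn u (Finsupp.equivMapDomain π.symm β)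
      * coeff (Finsupp.equivMapDomain π.symm β) f := by
  conv_lhs => rw [← equivMapDomain_inv π β]
  rw [coeff_sigma π u σ hσ]

lemma support_sigma (π : Equiv.Perm (Fin n)) (u : Fin n → ℝ) (hu : ∀ i, u i = 1 ∨ u i = -1)
    (σ : MvPolynomial (Fin n) ℝ ≃ₐ[ℝ] MvPolynomial (Fin n) ℝ)
    (hσ : ∀ i, σ (X i) = u i • X (π i)) (f : MvPolynomial (Fin n) ℝ) :
    (σ f).support = f.support.image (fun α => Finsupp.equivMapDomain π α) := by
  ext β
  rw [Finset.mem_image, mem_support_iff, coeff_sigma' π u σ hσ]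
  constructor
  · intro h
    refine ⟨Finsupp.equivMapDomain π.symm β, mem_support_iff.2 ?_, equivMapDomain_inv π β⟩
    intro h0
    exact h (by rw [h0, mul_zero])
  · rintro ⟨α, hα, rfl⟩
    rw [equivMapDomain_inv' π α]
    exact mul_ne_zero (sgn_ne_zero u hu α) (mem_support_iff.1 hα)

lemma wdeg_perm (π : Equiv.Perm (Fin n)) (w : Fin n → ℚ) (α : Fin n →₀ ℕ) :
    wdeg (fun j => w (π.symm j)) (Finsupp.equivMapDomain π α) = wdeg w α := by
  rw [wdeg, wdeg]
  simp only [Finsupp.equivMapDomain_apply]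
  exact Equiv.sum_comp π.symm (fun i => w i * (α i : ℚ))

lemma initialForm_sigma (π : Equiv.Perm (Fin n)) (u : Fin n → ℝ)
    (hu : ∀ i, u i = 1 ∨ u i = -1)
    (σ : MvPolynomial (Fin n) ℝ ≃ₐ[ℝ] MvPolynomial (Fin n) ℝ)
    (hσ : ∀ i, σ (X i) = u i • X (π i)) (w : Fin n → ℚ) (f : MvPolynomial (Fin n) ℝ) :
    initialForm (fun j => w (π.symm j)) (σ f) = σ (initialForm w f) := by
  classical
  set D : (Fin n →₀ ℕ) → (Fin n →₀ ℕ) := fun α => Finsupp.equivMapDomain π α with hD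
  have hDinj : Function.Injective D := by
    intro a b hab
    have := congrArg (Finsupp.equivMapDomain π.symm) hab
    simpa [hD, equivMapDomain_inv' π] using this
  have hsupp : ∀ β, β ∈ (σ f).support ↔ ∃ α ∈ f.support, D α = β := by
    intro β
    rw [support_sigma π u hu σ hσ, Finset.mem_image]
  have hfilter : (σ f).support.filter
        (fun β => ∀ γ ∈ (σ f).support, wdeg (fun j => w (π.symm j)) γ ≤ wdeg (fun j => w (π.symm j)) β)
      = (f.support.filter (fun α => ∀ β ∈ f.support, wdeg w β ≤ wdeg w α)).image D := by
    ext β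
    simp only [Finset.mem_filter, Finset.mem_image]
    constructor
    · rintro ⟨hβ, hmax⟩
      obtain ⟨α, hα, rfl⟩ := (hsupp β).1 hβ
      refine ⟨α, ⟨hα, ?_⟩, rfl⟩
      intro γ hγ
      have h1 := hmax (D γ) ((hsupp _).2 ⟨γ, hγ, rfl⟩)
      rwa [hD, wdeg_perm, wdeg_perm] at h1
    · rintro ⟨α, ⟨hα, hmax⟩, rfl⟩
      refine ⟨(hsupp _).2 ⟨α, hα, rfl⟩, ?_⟩
      intro γ hγ
      obtain ⟨δ, hδ, rfl⟩ := (hsupp γ).1 hγ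
      rw [hD, wdeg_perm, wdeg_perm]
      exact hmax δ hδ
  rw [initialForm, initialForm, hfilter, Finset.sum_image (fun a _ b _ h => hDinj h), map_sum]
  apply Finset.sum_congr rfl
  intro α hα
  rw [sigma_monomial π u σ hσ, hD]
  rw [coeff_sigma π u σ hσ]

end Stmt11Aux

/-- Let `I` be an ideal of `ℝ[x₁,…,xₙ]` invariant under the signed permutation automorphism
`σ` (with `σ·xᵢ = uᵢ·x_{π(i)}`), let `w ∈ ℚⁿ`, and let `G` be a Gröbner basis of `in_w(I)`
consisting of binomials.  Then `in_{π·w}(I) ∩ ℝ≥0[x] = {0}` if and only if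
`σ·G ∩ ℝ≥0[x] = ∅` and `σ·G ∩ ℝ≤0[x] = ∅`. -/
theorem statement11 (n : ℕ)
    (π : Equiv.Perm (Fin n)) (u : Fin n → ℝ) (hu : ∀ i, u i = 1 ∨ u i = -1)
    (σ : MvPolynomial (Fin n) ℝ ≃ₐ[ℝ] MvPolynomial (Fin n) ℝ)
    (hσ : ∀ i, σ (X i) = u i • X (π i))
    (I : Ideal (MvPolynomial (Fin n) ℝ)) (hI : Ideal.map σ.toAlgHom.toRingHom I = I)
    (w : Fin n → ℚ) (m : MonOrd n) (G : Finset (MvPolynomial (Fin n) ℝ))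
    (hG : IsGroebnerBasis m G (initialIdeal w I))
    (hbin : ∀ g ∈ G, g.support.card = 2) :
    (initialIdeal (fun j => w (π.symm j)) I : Set (MvPolynomial (Fin n) ℝ)) ∩
        {f | NonnegCoeffs f} = {0} ↔
      ((fun g => σ g) '' (G : Set (MvPolynomial (Fin n) ℝ))) ∩ {f | NonnegCoeffs f} = ∅ ∧
      ((fun g => σ g) '' (G : Set (MvPolynomial (Fin n) ℝ))) ∩ {f | NonposCoeffs f} = ∅ := by
  classical
  obtain ⟨hGJ, hG0, hGB⟩ := hG
  set σr := σ.toAlgHom.toRingHom with hσr_def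
  have hσr_apply : ∀ x, σr x = σ x := fun x => rfl
  have hσr_surj : Function.Surjective ⇑σr := σ.surjective
  -- the ideal `I` is invariant as a set
  have hIset : (fun x => σ x) '' (I : Set (MvPolynomial (Fin n) ℝ)) = (I : Set _) := by
    ext x
    constructor
    · rintro ⟨y, hy, rfl⟩
      show σ y ∈ (I : Set _)
      rw [← hI]
      exact Ideal.mem_map_of_mem σr hy
    · intro hx
      rw [← hI] at hx
      obtain ⟨y, hy, hyx⟩ := (Ideal.mem_map_iff_of_surjective σr hσr_surj).1 hx
      exact ⟨y, hy, hyx⟩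
  -- the permuted initial ideal is the image of the original one
  have hJeq : initialIdeal (fun j => w (π.symm j)) I = Ideal.map σr (initialIdeal w I) := by
    rw [initialIdeal, initialIdeal, Ideal.map_span]
    congr 1
    have h1 : ⇑σr '' (initialForm w '' (I : Set (MvPolynomial (Fin n) ℝ)))
        = (fun f => initialForm (fun j => w (π.symm j)) (σ f)) '' (I : Set _) := by
      rw [Set.image_image]
      apply Set.image_congr
      intro f _
      rw [hσr_apply]
      exact (Stmt11Aux.initialForm_sigma π u hu σ hσ w f).symm
    rw [h1]
    have h2 : (fun f => initialForm (fun j => w (π.symm j)) (σ f)) '' (I : Set _)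
        = initialForm (fun j => w (π.symm j)) '' ((fun x => σ x) '' (I : Set _)) := by
      rw [Set.image_image]
    rw [h2, hIset]
  have hmem' : ∀ f, f ∈ initialIdeal (fun j => w (π.symm j)) I ↔ σ.symm f ∈ initialIdeal w I := by
    intro f
    rw [hJeq]
    constructor
    · intro h
      obtain ⟨x, hx, hxf⟩ := (Ideal.mem_map_iff_of_surjective σr hσr_surj).1 h
      have hx2 : σ.symm f = x := by
        rw [← hxf, hσr_apply, AlgEquiv.symm_apply_apply]
      rwa [hx2]
    · intro h
      have h2 := Ideal.mem_map_of_mem σr h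
      rwa [hσr_apply, AlgEquiv.apply_symm_apply] at h2
  -- exponent permutation maps
  set D : (Fin n →₀ ℕ) → (Fin n →₀ ℕ) := fun α => Finsupp.equivMapDomain π α with hD_def
  set P : (Fin n →₀ ℕ) → (Fin n →₀ ℕ) := fun α => Finsupp.equivMapDomain π.symm α with hP_def
  have hPD : ∀ α, P (D α) = α := fun α => Stmt11Aux.equivMapDomain_inv' π α
  have hDP : ∀ α, D (P α) = α := fun α => Stmt11Aux.equivMapDomain_inv π α
  have hPadd : ∀ a b, P (a + b) = P a + P b := by
    intro a b; ext j; simp [hP_def, Finsupp.equivMapDomain_apply]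
  have hPzero : P 0 = 0 := by
    ext j; simp [hP_def, Finsupp.equivMapDomain_apply]
  -- the transported monomial order
  set m' : MonOrd n :=
    { le := fun a b => m.le (P a) (P b)
      le_refl := fun a => m.le_refl _
      le_trans := fun a b c h1 h2 => m.le_trans _ _ _ h1 h2
      le_antisymm := fun a b h1 h2 => by
        have h3 := m.le_antisymm _ _ h1 h2
        have h4 := congrArg D h3
        rwa [hDP, hDP] at h4
      le_total := fun a b => m.le_total _ _
      add_le_add_right := fun a b h c => by
        have h5 := m.add_le_add_right _ _ h (P c)
        show m.le (P (a + c)) (P (b + c))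
        rwa [hPadd, hPadd]
      zero_le := fun a => by
        show m.le (P 0) (P a)
        rw [hPzero]
        exact m.zero_le _ } with hm'_def
  have hGJ' : ((G.image fun g => σ g : Finset (MvPolynomial (Fin n) ℝ)) : Set _)
      ⊆ (initialIdeal (fun j => w (π.symm j)) I : Set (MvPolynomial (Fin n) ℝ)) := by
    intro x hx
    rw [Finset.coe_image, Set.mem_image] at hx
    obtain ⟨g, hg, rfl⟩ := hx
    show σ g ∈ initialIdeal (fun j => w (π.symm j)) I
    rw [hmem', AlgEquiv.symm_apply_apply]
    exact hGJ hg
  have hbin' : ∀ g' ∈ G.image (fun g => σ g), g'.support.card = 2 := by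
    intro g' hg'
    rw [Finset.mem_image] at hg'
    obtain ⟨g, hg, rfl⟩ := hg'
    rw [Stmt11Aux.support_sigma π u hu σ hσ, Finset.card_image_of_injective, hbin g hg]
    intro a b hab
    have h6 := congrArg P hab
    rwa [hPD, hPD] at h6
  have hlead_tr : ∀ (h : MvPolynomial (Fin n) ℝ) α, IsLeadMon m h α →
      IsLeadMon m' (σ h) (D α) := by
    intro h α hl
    constructor
    · rw [Stmt11Aux.support_sigma π u hu σ hσ]
      exact Finset.mem_image_of_mem _ hl.1
    · intro β hβ
      rw [Stmt11Aux.support_sigma π u hu σ hσ, Finset.mem_image] at hβ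
      obtain ⟨γ, hγ, rfl⟩ := hβ
      show m.le (P (D γ)) (P (D α))
      rw [hPD, hPD]
      exact hl.2 γ hγ
  have hle_tr : ∀ a b : Fin n →₀ ℕ, a ≤ b → D a ≤ D b := by
    intro a b hab
    rw [Finsupp.le_def] at hab ⊢
    intro j
    simpa [hD_def, Finsupp.equivMapDomain_apply] using hab (π.symm j)
  have hGB' : ∀ f ∈ initialIdeal (fun j => w (π.symm j)) I, f ≠ 0 →
      ∃ g' ∈ G.image (fun g => σ g), ∃ α β, IsLeadMon m' f α ∧ IsLeadMon m' g' β ∧ β ≤ α := by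
    intro f hf hf0
    have h1 : σ.symm f ∈ initialIdeal w I := (hmem' f).1 hf
    have h2 : σ.symm f ≠ 0 := by
      intro h
      apply hf0
      have h3 := congrArg σ h
      rwa [AlgEquiv.apply_symm_apply, map_zero] at h3
    obtain ⟨g, hg, α, β, hlf, hlg, hba⟩ := hGB _ h1 h2
    refine ⟨σ g, Finset.mem_image_of_mem _ hg, D α, D β, ?_, hlead_tr g β hlg, hle_tr _ _ hba⟩
    have h4 := hlead_tr _ _ hlf
    rwa [AlgEquiv.apply_symm_apply] at h4
  have hmem0 : ∀ g ∈ G, σ g ∈ initialIdeal (fun j => w (π.symm j)) I := by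
    intro g hg
    rw [hmem', AlgEquiv.symm_apply_apply]
    exact hGJ hg
  have hσinj : ∀ g : MvPolynomial (Fin n) ℝ, σ g = 0 → g = 0 := by
    intro g h
    have h3 := congrArg σ.symm h
    rwa [AlgEquiv.symm_apply_apply, map_zero] at h3
  constructor
  · intro hL
    constructor
    · rw [Set.eq_empty_iff_forall_notMem]
      rintro x ⟨⟨g, hg, rfl⟩, hx⟩
      have h5 : σ g ∈ (initialIdeal (fun j => w (π.symm j)) I : Set (MvPolynomial (Fin n) ℝ))
          ∩ {f | NonnegCoeffs f} := ⟨hmem0 g hg, hx⟩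
      rw [hL, Set.mem_singleton_iff] at h5
      exact hG0 g hg (hσinj g h5)
    · rw [Set.eq_empty_iff_forall_notMem]
      rintro x ⟨⟨g, hg, rfl⟩, hx⟩
      have hnn : NonnegCoeffs (-(σ g)) := by
        intro α
        rw [coeff_neg]
        exact neg_nonneg.2 (hx α)
      have h5 : -(σ g) ∈ (initialIdeal (fun j => w (π.symm j)) I : Set (MvPolynomial (Fin n) ℝ))
          ∩ {f | NonnegCoeffs f} := ⟨neg_mem (hmem0 g hg), hnn⟩
      rw [hL, Set.mem_singleton_iff, neg_eq_zero] at h5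
      exact hG0 g hg (hσinj g h5)
  · rintro ⟨h1, h2⟩
    have hpos' : ∀ g' ∈ G.image (fun g => σ g), ¬ NonnegCoeffs g' := by
      intro g' hg' hnn
      rw [Finset.mem_image] at hg'
      obtain ⟨g, hg, rfl⟩ := hg'
      have h5 : σ g ∈ ((fun g => σ g) '' (G : Set (MvPolynomial (Fin n) ℝ)))
          ∩ {f | NonnegCoeffs f} := ⟨⟨g, hg, rfl⟩, hnn⟩
      rw [h1] at h5
      exact h5
    have hneg' : ∀ g' ∈ G.image (fun g => σ g), ¬ NonposCoeffs g' := by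
      intro g' hg' hnn
      rw [Finset.mem_image] at hg'
      obtain ⟨g, hg, rfl⟩ := hg'
      have h5 : σ g ∈ ((fun g => σ g) '' (G : Set (MvPolynomial (Fin n) ℝ)))
          ∩ {f | NonposCoeffs f} := ⟨⟨g, hg, rfl⟩, hnn⟩
      rw [h2] at h5
      exact h5
    apply Set.eq_of_subset_of_subset
    · rintro x ⟨hxI, hxnn⟩
      have h6 := Stmt11Aux.key m' (G.image fun g => σ g)
        (initialIdeal (fun j => w (π.symm j)) I) hGJ' hGB' hbin' hpos' hneg' x hxI hxnn
      rw [Set.mem_singleton_iff]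
      exact h6
    · rintro x hx
      rw [Set.mem_singleton_iff] at hx
      subst hx
      exact ⟨(initialIdeal (fun j => w (π.symm j)) I).zero_mem, fun α => by simp⟩
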